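/- Let (A, G, α) be a C*-dynamical system where A is a unital C*-algebra with unitary group U, and G is a discrete group admitting a left G-invariant bounded functional m_G on ℓ^∞(G) with m_G(1) = 1. Let E be a Banach ℓ¹(G,A;α)-bimodule and D : ℓ¹(G,A;α) → E* a bounded derivation. Let F_{D,U} ⊆ ℓ^∞(U) be the span of the constant 1 and the functions φ_{x,D}(u) = ⟨x, Du·u⁻¹⟩ for x ∈ E. If there exists a left U-invariant bounded functional m on F_{D,U} with m(1) = 1, then D is an inner derivation of ℓ¹(G,A;α): there is ξ* ∈ E* with Da = a·ξ* − ξ*·a for all a ∈ ℓ¹(G,A;α). -/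

import Mathlib

instance : Fact ((1 : ENNReal) ≤ 1) := ⟨le_rfl⟩

open BoundedContinuousFunction

/-- A Banach `B`-bimodule: bilinear, mutually commuting left and right actions of the
normed algebra `B` on a Banach space `E` satisfying the usual norm estimates. -/
structure AlgBimodule (B E : Type*) [NonUnitalNormedRing B] [NormedSpace ℂ B]
    [NormedAddCommGroup E] [NormedSpace ℂ E] where
  l : B →ₗ[ℂ] E →L[ℂ] E
  r : B →ₗ[ℂ] E →L[ℂ] E
  l_mul : ∀ a b : B, l (a * b) = (l a).comp (l b)
  r_mul : ∀ a b : B, r (a * b) = (r b).comp (r a)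
  lr_comm : ∀ a b : B, ∀ x : E, l a (r b x) = r b (l a x)
  bound : ∃ K : ℝ, 0 ≤ K ∧ ∀ (a : B) (x : E),
    ‖l a x‖ ≤ K * ‖a‖ * ‖x‖ ∧ ‖r a x‖ ≤ K * ‖a‖ * ‖x‖

open Complex in
lemma selfadjoint_eq_unitary_avg {A : Type*} [NormedRing A] [StarRing A] [CStarRing A]
    [NormedAlgebra ℂ A] [StarModule ℂ A] [CompleteSpace A] [Nontrivial A]
    {a : A} (ha : IsSelfAdjoint a) (hn : ‖a‖ ≤ 1) :
    ∃ u : A, u ∈ unitary A ∧ a = (1/2 : ℂ) • (u + star u) := by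
  letI : CStarAlgebra A :=
    { ‹NormedRing A›, ‹StarRing A›, ‹CStarRing A›, ‹NormedAlgebra ℂ A›, ‹StarModule ℂ A›,
      ‹CompleteSpace A› with }
  have hna : IsStarNormal a := ha.isStarNormal
  set f : ℂ → ℂ := fun z => (z.re : ℂ) + (Real.sqrt (1 - z.re ^ 2) : ℂ) * Complex.I with hf
  have hcont : Continuous f := by
    apply Continuous.add
    · exact continuous_ofReal.comp continuous_re
    · exact (continuous_ofReal.comp ((Real.continuous_sqrt.comp (by continuity)))).mul
        continuous_const
  have hstarf : ∀ z : ℂ, star (f z) = (z.re : ℂ) - (Real.sqrt (1 - z.re ^ 2) : ℂ) * Complex.I := by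
    intro z
    simp only [hf, star_add, star_mul', Complex.star_def, Complex.conj_ofReal, Complex.conj_I]
    ring
  have hspec : ∀ z ∈ spectrum ℂ a, z = (z.re : ℂ) ∧ (0:ℝ) ≤ 1 - z.re ^ 2 := by
    intro z hz
    have h1 := ha.mem_spectrum_eq_re hz
    refine ⟨h1, ?_⟩
    have h2 : ‖z‖ ≤ ‖a‖ := spectrum.norm_le_norm_of_mem hz
    have h3 : |z.re| ≤ 1 := le_trans (le_trans (Complex.abs_re_le_norm z) h2) hn
    nlinarith [abs_nonneg z.re, _root_.sq_abs z.re]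
  have hmem : cfc f a ∈ unitary A := by
    rw [cfc_unitary_iff f a hna hcont.continuousOn]
    intro z hz
    obtain ⟨hz1, hz2⟩ := hspec z hz
    rw [hstarf]
    set s : ℝ := Real.sqrt (1 - z.re ^ 2) with hs
    have h5 : (s:ℂ)^2 = ((1 - z.re^2 : ℝ) : ℂ) := by
      rw [← Complex.ofReal_pow, Real.sq_sqrt hz2]
    calc ((z.re:ℂ) - s*I) * ((z.re:ℂ) + s*I) = (z.re:ℂ)^2 - (s:ℂ)^2*I^2 := by ring
    _ = (z.re:ℂ)^2 + (s:ℂ)^2 := by rw [Complex.I_sq]; ring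
    _ = ((z.re^2 + (1 - z.re^2) : ℝ) : ℂ) := by rw [h5]; push_cast; ring
    _ = 1 := by norm_num
  refine ⟨cfc f a, hmem, ?_⟩
  have h6 : cfc f a + star (cfc f a) = (2:ℂ) • a := by
    rw [← cfc_star f a, ← cfc_add a f (fun z => star (f z)) hcont.continuousOn
      (continuous_star.comp hcont).continuousOn]
    have : cfc (fun z => f z + star (f z)) a = cfc (fun z : ℂ => (2:ℂ) • id z) a := by
      apply cfc_congr
      intro z hz
      obtain ⟨hz1, _⟩ := hspec z hz
      show f z + star (f z) = (2:ℂ) • id z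
      rw [hstarf]
      simp only [hf, smul_eq_mul, id_eq]
      rw [← hz1]
      ring
    rw [this, cfc_smul (2:ℂ) id a, cfc_id ℂ a hna]
  rw [h6, smul_smul]
  norm_num

lemma span_unitary_eq_top {A : Type*} [NormedRing A] [StarRing A] [CStarRing A]
    [NormedAlgebra ℂ A] [StarModule ℂ A] [CompleteSpace A] :
    Submodule.span ℂ ((unitary A : Set A)) = ⊤ := by
  rcases subsingleton_or_nontrivial A with hA | hA
  · exact Subsingleton.elim _ _
  refine eq_top_iff.mpr fun a _ => ?_
  have hsa : ∀ s : A, IsSelfAdjoint s → s ∈ Submodule.span ℂ ((unitary A : Set A)) := by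
    intro s hs
    rcases eq_or_ne s 0 with rfl | hs0
    · exact zero_mem _
    · have hns : ‖s‖ ≠ 0 := norm_ne_zero_iff.mpr hs0
      have hn : ‖((‖s‖⁻¹ : ℝ) : ℂ) • s‖ ≤ 1 := by
        rw [norm_smul]
        simp only [Complex.norm_real, Real.norm_eq_abs, abs_inv, abs_norm]
        rw [inv_mul_cancel₀ hns]
      have hsa' : IsSelfAdjoint (((‖s‖⁻¹ : ℝ) : ℂ) • s) := by
        rw [IsSelfAdjoint, star_smul, Complex.star_def, Complex.conj_ofReal, hs.star_eq]
      obtain ⟨u, hu, heq⟩ := selfadjoint_eq_unitary_avg hsa' hn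
      have hss : s = ((‖s‖ : ℝ) : ℂ) • (((‖s‖⁻¹ : ℝ) : ℂ) • s) := by
        rw [smul_smul, ← Complex.ofReal_mul, mul_inv_cancel₀ hns]
        simp
      rw [hss, heq]
      exact Submodule.smul_mem _ _ (Submodule.smul_mem _ _
        (add_mem (Submodule.subset_span hu) (Submodule.subset_span (Unitary.star_mem hu))))
  have h1 : IsSelfAdjoint ((1/2 : ℂ) • (a + star a)) := by
    rw [IsSelfAdjoint, star_smul, star_add, star_star]
    have : star (1/2 : ℂ) = 1/2 := by simp
    rw [this]; module
  have h2 : IsSelfAdjoint ((-(1/2) * Complex.I : ℂ) • (a - star a)) := by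
    rw [IsSelfAdjoint, star_smul, star_sub, star_star]
    have : star (-(1/2) * Complex.I : ℂ) = (1/2) * Complex.I := by
      simp [Complex.star_def, Complex.conj_I]
    rw [this]; module
  have hdec : a = (1/2 : ℂ) • (a + star a)
      + Complex.I • ((-(1/2) * Complex.I : ℂ) • (a - star a)) := by
    have hI : Complex.I * (-(1/2) * Complex.I) = 1/2 := by
      rw [show Complex.I * (-(1/2) * Complex.I) = -(1/2) * (Complex.I * Complex.I) by ring,
        Complex.I_mul_I]; norm_num
    rw [smul_smul, hI]; module
  rw [hdec]
  exact add_mem (hsa _ h1) (Submodule.smul_mem _ _ (hsa _ h2))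

/-- `F_{D,U}`: span of the constant `1` and the functions `φ_{x,D}` on the unitary
group `U` of `A`. -/
noncomputable def FDU {A B E : Type*}
    [NormedRing A] [StarRing A] [CStarRing A] [NormedAlgebra ℂ A] [CompleteSpace A]
    [NormedRing B] [NormedAlgebra ℂ B]
    [NormedAddCommGroup E] [NormedSpace ℂ E]
    (ιA : A →ₗ[ℂ] B) (M : AlgBimodule B E) (D : B →L[ℂ] (E →L[ℂ] ℂ)) :
    Submodule ℂ (unitary A → ℂ) :=
  Submodule.span ℂ (insert (fun _ => (1 : ℂ))
    {f : unitary A → ℂ | ∃ x : E,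
      f = fun u : unitary A => D (ιA (↑u : A)) (M.l (ιA ((↑(u⁻¹) : A))) x)})

set_option maxHeartbeats 1000000 in
/-- let `(A,G,α)` be a C*-dynamical system with `A` unital and `G` a
discrete group carrying a left invariant normalised bounded functional on `ℓ^∞(G)`.
If `D` is a bounded derivation of `ℓ¹(G,A;α)` into a dual Banach bimodule `E*` and there
is a left `U`-invariant normalised bounded functional on the span `F_{D,U}` of the
constant `1` and the functions `φ_{x,D}(u) = ⟨x, Du·u⁻¹⟩`, then `D` is inner. -/
theorem stmt14 {G A B E : Type*} [Group G] [DecidableEq G]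
    [TopologicalSpace G] [DiscreteTopology G]
    [NormedRing A] [StarRing A] [CStarRing A] [NormedAlgebra ℂ A] [StarModule ℂ A]
    [CompleteSpace A]
    [NormedRing B] [NormedAlgebra ℂ B] [CompleteSpace B]
    [NormedAddCommGroup E] [NormedSpace ℂ E] [CompleteSpace E]
    (α : G → A ≃⋆ₐ[ℂ] A)
    (hα : ∀ g h : G, ∀ a : A, α (g * h) a = α g (α h a))
    -- the invariant functional on `ℓ^∞(G)`:
    (mG : (G →ᵇ ℂ) →L[ℂ] ℂ) (hmG1 : mG 1 = 1)
    (hmGinv : ∀ (g₀ : G) (f f' : G →ᵇ ℂ), (∀ g : G, f' g = f (g₀ * g)) → mG f' = mG f)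
    -- `B` is the twisted convolution algebra `ℓ¹(G,A;α)`:
    (e : B ≃ₗᵢ[ℂ] lp (fun _ : G => A) 1)
    (he : ∀ a b : B, ∀ g : G, e (a * b) g = ∑' h : G, e a h * α h (e b (h⁻¹ * g)))
    -- the canonical embedding `a ↦ a δ_e` of `A` into `B`:
    (ιA : A →ₗ[ℂ] B)
    (hι : ∀ (a : A) (g : G), e (ιA a) g = if g = 1 then a else 0)
    (M : AlgBimodule B E) (D : B →L[ℂ] (E →L[ℂ] ℂ))
    (hD : ∀ a b : B, ∀ x : E, D (a * b) x = D a (M.l b x) + D b (M.r a x))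
    -- the invariant functional on `F_{D,U}`:
    (m : ↥(FDU ιA M D) →ₗ[ℂ] ℂ)
    (hmbdd : ∃ C : ℝ, ∀ (f : ↥(FDU ιA M D)) (Cf : ℝ),
      (∀ u : unitary A, ‖(↑f : unitary A → ℂ) u‖ ≤ Cf) → ‖m f‖ ≤ C * Cf)
    (hm1 : ∀ f : ↥(FDU ιA M D),
      (∀ u : unitary A, (↑f : unitary A → ℂ) u = 1) → m f = 1)
    (hminv : ∀ (u₀ : unitary A) (f f' : ↥(FDU ιA M D)),
      (∀ u : unitary A, (↑f' : unitary A → ℂ) u = (↑f : unitary A → ℂ) (u₀ * u)) →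
        m f' = m f) :
    ∃ ξ : E →L[ℂ] ℂ, ∀ (b : B) (x : E), D b x = ξ (M.r b x) - ξ (M.l b x) := by
  rcases subsingleton_or_nontrivial A with hA | hA
  · -- trivial algebra: B is trivial and D = 0
    have hB0 : ∀ b : B, b = 0 := by
      intro b
      have : Subsingleton (lp (fun _ : G => A) 1) := by
        constructor; intro f g; apply lp.ext; funext g'; exact Subsingleton.elim _ _
      exact e.injective (Subsingleton.elim _ _)
    refine ⟨0, fun b x => ?_⟩
    rw [hB0 b, map_zero]
    simp
  -- preliminary algebra facts
  have hα1 : ∀ a : A, α 1 a = a := by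
    intro a
    have h := hα 1 1 a
    rw [one_mul] at h
    exact ((α 1).injective h).symm
  have hαinv : ∀ (g : G) (a : A), α g (α g⁻¹ a) = a := by
    intro g a
    rw [← hα g g⁻¹ a, mul_inv_cancel]
    exact hα1 a
  have hmulB1 : ∀ b : B, b * ιA 1 = b := by
    intro b
    apply e.injective; apply lp.ext; funext g
    show e (b * ιA 1) g = e b g
    rw [he]
    rw [tsum_eq_single g (fun h hne => by
      rw [hι, if_neg (fun hh => hne (inv_mul_eq_one.mp hh)), map_zero, mul_zero])]
    rw [hι, if_pos (inv_mul_cancel g), map_one, mul_one]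
  have hιone : ιA (1:A) = (1:B) := by
    have h := hmulB1 1
    rwa [one_mul] at h
  have hιmul : ∀ a b : A, ιA a * ιA b = ιA (a * b) := by
    intro a b
    apply e.injective; apply lp.ext; funext g
    show e (ιA a * ιA b) g = e (ιA (a*b)) g
    rw [he]
    rw [tsum_eq_single 1 (fun h hne => by rw [hι, if_neg hne, zero_mul])]
    rw [hι, if_pos rfl, inv_one, one_mul, hι, hι]
    by_cases hg : g = 1
    · simp [hg, hα1]
    · simp [hg, map_zero]
  set δ : G → B := fun g => e.symm (lp.single 1 g (1:A)) with hδdef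
  have hδcoe : ∀ g h : G, e (δ g) h = if h = g then 1 else 0 := by
    intro g h
    show e (e.symm (lp.single 1 g (1:A))) h = _
    rw [e.apply_symm_apply]
    by_cases hh : h = g
    · subst hh; rw [lp.single_apply_self, if_pos rfl]
    · rw [lp.single_apply_ne 1 g _ hh, if_neg hh]
  have hδ1 : δ (1:G) = 1 := by
    rw [← hιone]
    apply e.injective; apply lp.ext; funext h
    show e (δ 1) h = e (ιA 1) h
    rw [hδcoe, hι]
  have hδmul : ∀ g g' : G, δ g * δ g' = δ (g * g') := by
    intro g g'
    apply e.injective; apply lp.ext; funext k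
    show e (δ g * δ g') k = e (δ (g * g')) k
    rw [he]
    rw [tsum_eq_single g (fun h hne => by rw [hδcoe, if_neg hne, zero_mul])]
    rw [hδcoe, if_pos rfl, one_mul, hδcoe, hδcoe]
    by_cases hk : g⁻¹ * k = g'
    · rw [if_pos hk, map_one, if_pos (by rw [← hk, mul_inv_cancel_left])]
    · rw [if_neg hk, map_zero, if_neg (fun hh => hk (by rw [hh, inv_mul_cancel_left]))]
  have hδι : ∀ (g : G) (a : A), δ g * ιA a = ιA (α g a) * δ g := by
    intro g a
    apply e.injective; apply lp.ext; funext k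
    show e (δ g * ιA a) k = e (ιA (α g a) * δ g) k
    rw [he, he]
    rw [tsum_eq_single g (fun h hne => by rw [hδcoe, if_neg hne, zero_mul])]
    rw [tsum_eq_single 1 (fun h hne => by rw [hι, if_neg hne, zero_mul])]
    rw [hδcoe, if_pos rfl, one_mul, hι, hι, if_pos rfl, inv_one, one_mul, hδcoe]
    by_cases hk : k = g
    · rw [if_pos (by rw [hk, inv_mul_cancel]), if_pos hk, map_one, mul_one]
    · rw [if_neg (fun hh => hk ((inv_mul_eq_one.mp hh).symm)), if_neg hk, map_zero, map_zero, mul_zero]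
  -- norm facts
  have hnormι : ∀ a : A, ‖ιA a‖ = ‖a‖ := by
    intro a
    have h1 : e (ιA a) = lp.single 1 (1:G) a := by
      apply lp.ext; funext g
      show e (ιA a) g = _
      rw [hι]
      by_cases hg : g = 1
      · subst hg; rw [lp.single_apply_self, if_pos rfl]
      · rw [lp.single_apply_ne 1 1 _ hg, if_neg hg]
    have h2 : ‖ιA a‖ = ‖e (ιA a)‖ := (e.norm_map _).symm
    rw [h2, h1]
    exact lp.norm_single (E := fun _ : G => A) (p := 1) (by norm_num) 1 a
  have hnormδ : ∀ g : G, ‖δ g‖ = 1 := by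
    intro g
    show ‖e.symm (lp.single 1 g (1:A))‖ = 1
    rw [e.symm.norm_map]
    rw [lp.norm_single (E := fun _ : G => A) (p := 1) (by norm_num) g (1:A)]
    exact norm_one
  have hnorm1B : ‖(1:B)‖ = 1 := by rw [← hιone, hnormι, norm_one]
  -- unitary coercions
  have hu1 : ∀ u : unitary A, (↑u : A) * (↑(u⁻¹) : A) = 1 := by
    intro u
    calc (↑u : A) * (↑(u⁻¹) : A) = ((u * u⁻¹ : unitary A) : A) := rfl
    _ = ((1 : unitary A) : A) := by rw [mul_inv_cancel]
    _ = 1 := rfl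
  have hu2 : ∀ u : unitary A, (↑(u⁻¹) : A) * (↑u : A) = 1 := by
    intro u
    calc (↑(u⁻¹) : A) * (↑u : A) = ((u⁻¹ * u : unitary A) : A) := rfl
    _ = ((1 : unitary A) : A) := by rw [inv_mul_cancel]
    _ = 1 := rfl
  have hnormu : ∀ u : unitary A, ‖(↑u : A)‖ = 1 := fun u => CStarRing.norm_coe_unitary u
  -- module facts
  obtain ⟨K, hK0, hKb⟩ := M.bound
  have hMl : ∀ (b b' : B) (w : E), M.l (b * b') w = M.l b (M.l b' w) := by
    intro b b' w
    rw [M.l_mul]; rfl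
  have hMr : ∀ (b b' : B) (w : E), M.r (b * b') w = M.r b' (M.r b w) := by
    intro b b' w
    rw [M.r_mul]; rfl
  have hM1 : ∀ (b : B) (w : E), M.l b (M.l 1 w) = M.l b w := by
    intro b w
    have h := hMl b 1 w
    rw [mul_one] at h
    exact h.symm
  have hM2 : ∀ (b : B) (w : E), M.l 1 (M.l b w) = M.l b w := by
    intro b w
    have h := hMl 1 b w
    rw [one_mul] at h
    exact h.symm
  have hM3 : ∀ (b : B) (w : E), M.r b (M.r 1 w) = M.r b w := by
    intro b w
    have h := hMr 1 b w
    rw [one_mul] at h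
    exact h.symm
  have hM4 : ∀ (b : B) (w : E), M.r 1 (M.r b w) = M.r b w := by
    intro b w
    have h := hMr b 1 w
    rw [mul_one] at h
    exact h.symm
  -- corner facts
  have hC1 : ∀ (b : B) (x : E), D 1 (M.l b x) = D b x - D b (M.r 1 x) := by
    intro b x
    have h := hD 1 b x
    rw [one_mul] at h
    linear_combination -h
  have hC2 : ∀ (b : B) (x : E), D b x = D b (M.l 1 x) + D 1 (M.r b x) := by
    intro b x
    have h := hD b 1 x
    rwa [mul_one] at h
  have hC4 : ∀ (b : B) (x : E), D 1 (M.r 1 (M.l b x)) = 0 := by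
    intro b x
    have h1 : M.r 1 (M.l b x) = M.l b (M.r 1 x) := (M.lr_comm b 1 x).symm
    rw [h1, hC1 b (M.r 1 x), hM4 1 x]
    ring
  -- STEP U : averaging over the unitary group
  have hmemF : ∀ x : E, (fun u : unitary A => D (ιA (↑u : A)) (M.l (ιA ((↑(u⁻¹) : A))) x))
      ∈ FDU ιA M D :=
    fun x => Submodule.subset_span (Set.mem_insert_of_mem _ ⟨x, rfl⟩)
  have honeF : (fun _ : unitary A => (1:ℂ)) ∈ FDU ιA M D :=
    Submodule.subset_span (Set.mem_insert _ _)
  set F : E → ↥(FDU ιA M D) := fun x =>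
    ⟨fun u : unitary A => D (ιA (↑u : A)) (M.l (ιA ((↑(u⁻¹) : A))) (M.r 1 x)),
      hmemF (M.r 1 x)⟩ with hFdef
  have hFadd : ∀ x y : E, F (x + y) = F x + F y := by
    intro x y
    apply Subtype.ext
    funext u
    show D (ιA (↑u : A)) (M.l (ιA ((↑(u⁻¹) : A))) (M.r 1 (x + y))) = _
    have : ((F x + F y : ↥(FDU ιA M D)) : unitary A → ℂ) u
        = D (ιA (↑u : A)) (M.l (ιA ((↑(u⁻¹) : A))) (M.r 1 x))
          + D (ιA (↑u : A)) (M.l (ιA ((↑(u⁻¹) : A))) (M.r 1 y)) := rfl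
    rw [this, map_add (M.r 1), map_add (M.l (ιA ((↑(u⁻¹) : A)))), map_add]
  have hFsmul : ∀ (c : ℂ) (x : E), F (c • x) = c • F x := by
    intro c x
    apply Subtype.ext
    funext u
    show D (ιA (↑u : A)) (M.l (ιA ((↑(u⁻¹) : A))) (M.r 1 (c • x))) = _
    have : ((c • F x : ↥(FDU ιA M D)) : unitary A → ℂ) u
        = c • D (ιA (↑u : A)) (M.l (ιA ((↑(u⁻¹) : A))) (M.r 1 x)) := rfl
    rw [this, map_smul (M.r 1), map_smul (M.l (ιA ((↑(u⁻¹) : A)))), map_smul]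
  obtain ⟨Cm, hCm⟩ := hmbdd
  have hψb : ∀ x : E, ‖m (F x)‖ ≤ (Cm * (‖D‖ * (K * K))) * ‖x‖ := by
    intro x
    have hr1 : ‖M.r 1 x‖ ≤ K * ‖x‖ := by
      have h := (hKb 1 x).2
      rwa [hnorm1B, mul_one] at h
    have hptw : ∀ u : unitary A, ‖(↑(F x) : unitary A → ℂ) u‖ ≤ ‖D‖ * (K * (K * ‖x‖)) := by
      intro u
      show ‖D (ιA (↑u:A)) (M.l (ιA (↑(u⁻¹):A)) (M.r 1 x))‖ ≤ _
      have h3 : ‖D (ιA (↑u:A))‖ ≤ ‖D‖ := by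
        have h := D.le_opNorm (ιA (↑u:A))
        rwa [hnormι, hnormu u, mul_one] at h
      have h4 : ‖M.l (ιA (↑(u⁻¹):A)) (M.r 1 x)‖ ≤ K * (K * ‖x‖) := by
        have h := (hKb (ιA (↑(u⁻¹):A)) (M.r 1 x)).1
        rw [hnormι, hnormu u⁻¹, mul_one] at h
        exact le_trans h (by nlinarith)
      calc ‖D (ιA (↑u:A)) (M.l (ιA (↑(u⁻¹):A)) (M.r 1 x))‖
          ≤ ‖D (ιA (↑u:A))‖ * ‖M.l (ιA (↑(u⁻¹):A)) (M.r 1 x)‖ :=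
            ContinuousLinearMap.le_opNorm _ _
        _ ≤ ‖D‖ * (K * (K * ‖x‖)) := mul_le_mul h3 h4 (norm_nonneg _) (norm_nonneg D)
    have h5 := hCm (F x) (‖D‖ * (K * (K * ‖x‖))) hptw
    calc ‖m (F x)‖ ≤ Cm * (‖D‖ * (K * (K * ‖x‖))) := h5
    _ = (Cm * (‖D‖ * (K * K))) * ‖x‖ := by ring
  set ψL : E →ₗ[ℂ] ℂ :=
    { toFun := fun x => m (F x)
      map_add' := fun x y => by show m (F (x+y)) = m (F x) + m (F y); rw [hFadd, map_add]
      map_smul' := fun c x => by show m (F (c • x)) = (RingHom.id ℂ c) • m (F x); rw [hFsmul, map_smul]; rfl } with hψLdef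
  set ψc : E →L[ℂ] ℂ := ψL.mkContinuous (Cm * (‖D‖ * (K * K))) hψb with hψcdef
  have hψapp : ∀ x : E, ψc x = m (F x) := fun x => rfl
  have hψP : ∀ z : E, ψc (M.l 1 z) = ψc z := by
    intro z
    rw [hψapp, hψapp]
    congr 1
    apply Subtype.ext
    funext u
    show D (ιA (↑u:A)) (M.l (ιA (↑(u⁻¹):A)) (M.r 1 (M.l 1 z)))
      = D (ιA (↑u:A)) (M.l (ιA (↑(u⁻¹):A)) (M.r 1 z))
    rw [← M.lr_comm, hM1]
  have hψQ : ∀ z : E, ψc (M.r 1 z) = ψc z := by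
    intro z
    rw [hψapp, hψapp]
    congr 1
    apply Subtype.ext
    funext u
    show D (ιA (↑u:A)) (M.l (ιA (↑(u⁻¹):A)) (M.r 1 (M.r 1 z)))
      = D (ιA (↑u:A)) (M.l (ιA (↑(u⁻¹):A)) (M.r 1 z))
    rw [hM4 1 z]
  have hSTAR : ∀ (u₀ : unitary A) (x : E),
      ψc x = D (ιA (↑u₀:A)) (M.l (ιA (↑(u₀⁻¹):A)) (M.r 1 x))
        + ψc (M.l (ιA (↑(u₀⁻¹):A)) (M.r (ιA (↑u₀:A)) x)) := by
    intro u₀ x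
    set c : ℂ := D (ιA (↑u₀:A)) (M.l (ιA (↑(u₀⁻¹):A)) (M.r 1 x)) with hc
    set y₀ : E := M.l (ιA (↑(u₀⁻¹):A)) (M.r (ιA (↑u₀:A)) x) with hy₀
    have hqy : M.r 1 y₀ = y₀ := by
      rw [hy₀, ← M.lr_comm, hM4]
    have hpw : ∀ u : unitary A,
        D (ιA (↑(u₀*u):A)) (M.l (ιA (↑((u₀*u)⁻¹):A)) (M.r 1 x))
          = c + D (ιA (↑u:A)) (M.l (ιA (↑(u⁻¹):A)) (M.r 1 y₀)) := by
      intro u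
      have hcoe1 : (↑(u₀*u) : A) = (↑u₀:A) * (↑u:A) := rfl
      have hcoe2 : (↑((u₀*u)⁻¹) : A) = (↑(u⁻¹):A) * (↑(u₀⁻¹):A) := by rw [mul_inv_rev]; rfl
      rw [hcoe1, hcoe2, ← hιmul, ← hιmul, hD]
      congr 1
      · rw [hc, hMl, ← hMl, hιmul, hu1 u, hιone, hM2]
      · refine congrArg (D (ιA (↑u:A))) ?_
        rw [hqy, hy₀, hMl, ← M.lr_comm, ← M.lr_comm, hM3]
    have key := hminv u₀ (F x) (c • (⟨fun _ => 1, honeF⟩ : ↥(FDU ιA M D)) + F y₀) ?_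
    · have h2 : m (c • (⟨fun _ => 1, honeF⟩ : ↥(FDU ιA M D)) + F y₀) = c + m (F y₀) := by
        rw [map_add, map_smul, hm1 ⟨fun _ => 1, honeF⟩ (fun u => rfl), smul_eq_mul, mul_one]
      rw [hψapp x, hψapp y₀, ← key, h2]
    · intro u
      have h3 : (↑(c • (⟨fun _ => 1, honeF⟩ : ↥(FDU ιA M D)) + F y₀) : unitary A → ℂ) u
          = c + D (ιA (↑u:A)) (M.l (ιA (↑(u⁻¹):A)) (M.r 1 y₀)) := by
        have : (↑(c • (⟨fun _ => 1, honeF⟩ : ↥(FDU ιA M D)) + F y₀) : unitary A → ℂ) u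
            = c • (1:ℂ) + D (ιA (↑u:A)) (M.l (ιA (↑(u⁻¹):A)) (M.r 1 y₀)) := rfl
        rw [this, smul_eq_mul, mul_one]
      show (↑(c • (⟨fun _ => 1, honeF⟩ : ↥(FDU ιA M D)) + F y₀) : unitary A → ℂ) u
        = D (ιA (↑(u₀*u):A)) (M.l (ιA (↑((u₀*u)⁻¹):A)) (M.r 1 x))
      rw [h3, hpw u]
  have hEqUu : ∀ (u : unitary A) (y : E),
      D (ιA (↑u:A)) (M.l 1 (M.r 1 y)) = ψc (M.l (ιA (↑u:A)) y) - ψc (M.r (ιA (↑u:A)) y) := by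
    intro u y
    have h := hSTAR u (M.l (ιA (↑u:A)) y)
    have h1 : M.r (1:B) (M.l (ιA (↑u:A)) y) = M.l (ιA (↑u:A)) (M.r 1 y) :=
      (M.lr_comm _ 1 _).symm
    have h2 : M.l (ιA (↑(u⁻¹):A)) (M.l (ιA (↑u:A)) (M.r 1 y)) = M.l 1 (M.r 1 y) := by
      rw [← hMl, hιmul, hu2 u, hιone]
    have h3 : M.l (ιA (↑(u⁻¹):A)) (M.r (ιA (↑u:A)) (M.l (ιA (↑u:A)) y))
        = M.l 1 (M.r (ιA (↑u:A)) y) := by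
      rw [← M.lr_comm, ← hMl, hιmul, hu2 u, hιone]
    rw [h1, h2, h3, hψP] at h
    linear_combination -h
  have hEqU : ∀ (a : A) (y : E),
      D (ιA a) (M.l 1 (M.r 1 y)) = ψc (M.l (ιA a) y) - ψc (M.r (ιA a) y) := by
    intro a y
    have hsp : a ∈ Submodule.span ℂ ((unitary A : Set A)) := by
      rw [span_unitary_eq_top]; trivial
    induction hsp using Submodule.span_induction with
    | mem v hv => exact hEqUu ⟨v, hv⟩ y
    | zero => simp
    | add v w hv hw ihv ihw =>
        simp only [map_add, ContinuousLinearMap.add_apply]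
        linear_combination ihv + ihw
    | smul c v hv ihv =>
        simp only [map_smul, ContinuousLinearMap.smul_apply, smul_eq_mul]
        linear_combination c * ihv
  -- the corrected derivation D₁
  set D₁ : B → E → ℂ := fun b x => D b (M.l 1 (M.r 1 x)) + ψc (M.r b x) - ψc (M.l b x)
    with hD₁
  have hD1ι : ∀ (a : A) (x : E), D₁ (ιA a) x = 0 := by
    intro a x
    simp only [hD₁]
    linear_combination hEqU a x
  have hD1der : ∀ (b b' : B) (x : E), D₁ (b * b') x = D₁ b (M.l b' x) + D₁ b' (M.r b x) := by
    intro b b' x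
    have e1 : M.l b' (M.l 1 (M.r 1 x)) = M.l 1 (M.r 1 (M.l b' x)) := by
      rw [hM1, ← M.lr_comm, hM2]
    have e2 : M.r b (M.l 1 (M.r 1 x)) = M.l 1 (M.r 1 (M.r b x)) := by
      rw [hM4 b x, ← M.lr_comm, hM3]
    have e3 : M.r b (M.l b' x) = M.l b' (M.r b x) := (M.lr_comm b' b x).symm
    simp only [hD₁]
    rw [hD b b', hMl, hMr, e1, e2, e3]
    ring
  have hD1one : ∀ x : E, D₁ 1 x = 0 := by
    intro x
    simp only [hD₁]
    rw [hψQ x, hψP x]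
    have h := hC2 1 (M.l 1 (M.r 1 x))
    rw [hM2] at h
    have h2 : M.r 1 (M.l 1 (M.r 1 x)) = M.l 1 (M.r 1 x) := by
      rw [← M.lr_comm, hM4 1 x]
    rw [h2] at h
    linear_combination -h
  have hD1bdd : ∀ (b : B) (x : E),
      ‖D₁ b x‖ ≤ (‖D‖ * (K*K) + 2*(‖ψc‖*K)) * (‖b‖ * ‖x‖) := by
    intro b x
    have n1 : ‖D b (M.l 1 (M.r 1 x))‖ ≤ ‖D‖ * (K*K) * (‖b‖*‖x‖) := by
      have h1 : ‖M.r 1 x‖ ≤ K * ‖x‖ := by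
        have h := (hKb 1 x).2
        rwa [hnorm1B, mul_one] at h
      have h2 : ‖M.l 1 (M.r 1 x)‖ ≤ K * (K * ‖x‖) := by
        have h := (hKb 1 (M.r 1 x)).1
        rw [hnorm1B, mul_one] at h
        exact le_trans h (by nlinarith)
      have h3 := D.le_opNorm b
      calc ‖D b (M.l 1 (M.r 1 x))‖
          ≤ ‖D b‖ * ‖M.l 1 (M.r 1 x)‖ := ContinuousLinearMap.le_opNorm _ _
        _ ≤ (‖D‖ * ‖b‖) * (K * (K*‖x‖)) :=
            mul_le_mul h3 h2 (norm_nonneg _) (by positivity)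
        _ = ‖D‖ * (K*K) * (‖b‖*‖x‖) := by ring
    have n2 : ‖ψc (M.r b x)‖ ≤ ‖ψc‖*K*(‖b‖*‖x‖) := by
      have h2 := (hKb b x).2
      calc ‖ψc (M.r b x)‖ ≤ ‖ψc‖ * ‖M.r b x‖ := ψc.le_opNorm _
      _ ≤ ‖ψc‖ * (K*‖b‖*‖x‖) := mul_le_mul_of_nonneg_left h2 (norm_nonneg _)
      _ = ‖ψc‖*K*(‖b‖*‖x‖) := by ring
    have n3 : ‖ψc (M.l b x)‖ ≤ ‖ψc‖*K*(‖b‖*‖x‖) := by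
      have h2 := (hKb b x).1
      calc ‖ψc (M.l b x)‖ ≤ ‖ψc‖ * ‖M.l b x‖ := ψc.le_opNorm _
      _ ≤ ‖ψc‖ * (K*‖b‖*‖x‖) := mul_le_mul_of_nonneg_left h2 (norm_nonneg _)
      _ = ‖ψc‖*K*(‖b‖*‖x‖) := by ring
    have t1 := norm_sub_le (D b (M.l 1 (M.r 1 x)) + ψc (M.r b x)) (ψc (M.l b x))
    have t2 := norm_add_le (D b (M.l 1 (M.r 1 x))) (ψc (M.r b x))
    simp only [hD₁]
    have hgoal : ‖D b (M.l 1 (M.r 1 x)) + ψc (M.r b x) - ψc (M.l b x)‖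
        ≤ (‖D‖ * (K*K) + 2*(‖ψc‖*K)) * (‖b‖ * ‖x‖) := by
      have expand : (‖D‖ * (K*K) + 2*(‖ψc‖*K)) * (‖b‖ * ‖x‖)
          = ‖D‖ * (K*K) * (‖b‖*‖x‖) + ‖ψc‖*K*(‖b‖*‖x‖) + ‖ψc‖*K*(‖b‖*‖x‖) := by ring
      rw [expand]
      linarith
    exact hgoal
  -- STEP G : averaging over the group G
  have hD1add : ∀ (b : B) (w w' : E), D₁ b (w + w') = D₁ b w + D₁ b w' := by
    intro b w w'
    simp only [hD₁, map_add]
    ring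
  have hD1smul : ∀ (c : ℂ) (b : B) (w : E), D₁ b (c • w) = c * D₁ b w := by
    intro c b w
    simp only [hD₁, map_smul, smul_eq_mul]
    ring
  set CG : ℝ := (‖D‖ * (K*K) + 2*(‖ψc‖*K)) * K with hCG
  have hCG0 : 0 ≤ CG := by rw [hCG]; positivity
  have hφGb : ∀ (x : E) (g : G), ‖D₁ (δ g) (M.l (δ g⁻¹) x)‖ ≤ CG * ‖x‖ := by
    intro x g
    have h1 : ‖M.l (δ g⁻¹) x‖ ≤ K * ‖x‖ := by
      have h := (hKb (δ g⁻¹) x).1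
      rwa [hnormδ, mul_one] at h
    have h2 := hD1bdd (δ g) (M.l (δ g⁻¹) x)
    rw [hnormδ, one_mul] at h2
    calc ‖D₁ (δ g) (M.l (δ g⁻¹) x)‖
        ≤ (‖D‖ * (K*K) + 2*(‖ψc‖*K)) * ‖M.l (δ g⁻¹) x‖ := h2
      _ ≤ (‖D‖ * (K*K) + 2*(‖ψc‖*K)) * (K * ‖x‖) :=
          mul_le_mul_of_nonneg_left h1 (by positivity)
      _ = CG * ‖x‖ := by rw [hCG]; ring
  set φG : E → (G →ᵇ ℂ) := fun x => BoundedContinuousFunction.ofNormedAddCommGroup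
    (fun g => D₁ (δ g) (M.l (δ g⁻¹) x)) continuous_of_discreteTopology (CG * ‖x‖) (hφGb x)
    with hφGdef
  have hφGapp : ∀ (x : E) (g : G), φG x g = D₁ (δ g) (M.l (δ g⁻¹) x) := fun x g => rfl
  have hφGnorm : ∀ x : E, ‖φG x‖ ≤ CG * ‖x‖ := fun x =>
    BoundedContinuousFunction.norm_ofNormedAddCommGroup_le _
      (mul_nonneg hCG0 (norm_nonneg x)) _
  have hφGadd : ∀ x y : E, φG (x + y) = φG x + φG y := by
    intro x y
    ext g
    show D₁ (δ g) (M.l (δ g⁻¹) (x + y)) = (φG x + φG y) g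
    have h1 : (φG x + φG y) g = φG x g + φG y g := rfl
    rw [h1, map_add (M.l (δ g⁻¹)), hD1add, hφGapp, hφGapp]
  have hφGsmul : ∀ (c : ℂ) (x : E), φG (c • x) = c • φG x := by
    intro c x
    ext g
    show D₁ (δ g) (M.l (δ g⁻¹) (c • x)) = (c • φG x) g
    have h1 : (c • φG x) g = c * φG x g := rfl
    rw [h1, map_smul (M.l (δ g⁻¹)), hD1smul, hφGapp]
  set ξL : E →ₗ[ℂ] ℂ :=
    { toFun := fun x => mG (φG x)
      map_add' := fun x y => by
        show mG (φG (x+y)) = mG (φG x) + mG (φG y)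
        rw [hφGadd, map_add]
      map_smul' := fun c x => by
        show mG (φG (c • x)) = (RingHom.id ℂ c) • mG (φG x)
        rw [hφGsmul, map_smul]; rfl } with hξLdef
  have hξb : ∀ x : E, ‖ξL x‖ ≤ (‖mG‖ * CG) * ‖x‖ := by
    intro x
    show ‖mG (φG x)‖ ≤ _
    calc ‖mG (φG x)‖ ≤ ‖mG‖ * ‖φG x‖ := mG.le_opNorm _
    _ ≤ ‖mG‖ * (CG * ‖x‖) := mul_le_mul_of_nonneg_left (hφGnorm x) (norm_nonneg _)
    _ = (‖mG‖ * CG) * ‖x‖ := by ring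
  set ξG : E →L[ℂ] ℂ := ξL.mkContinuous (‖mG‖ * CG) hξb with hξGdef
  have hξapp : ∀ x : E, ξG x = mG (φG x) := fun x => rfl
  have hξP : ∀ z : E, ξG (M.l 1 z) = ξG z := by
    intro z
    rw [hξapp, hξapp]
    congr 1
    ext g
    show D₁ (δ g) (M.l (δ g⁻¹) (M.l 1 z)) = D₁ (δ g) (M.l (δ g⁻¹) z)
    rw [hM1]
  have hGINV : ∀ (g₀ : G) (x : E),
      ξG x = D₁ (δ g₀) (M.l (δ g₀⁻¹) x) + ξG (M.l (δ g₀⁻¹) (M.r (δ g₀) x)) := by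
    intro g₀ x
    set y₀ : E := M.l (δ g₀⁻¹) (M.r (δ g₀) x) with hy₀
    have hpw : ∀ g : G, φG x (g₀ * g) = φG x g₀ + φG y₀ g := by
      intro g
      show D₁ (δ (g₀ * g)) (M.l (δ (g₀*g)⁻¹) x)
        = D₁ (δ g₀) (M.l (δ g₀⁻¹) x) + D₁ (δ g) (M.l (δ g⁻¹) y₀)
      rw [← hδmul g₀ g, mul_inv_rev, ← hδmul g⁻¹ g₀⁻¹, hD1der]
      congr 1
      · refine congrArg (D₁ (δ g₀)) ?_
        rw [hMl, ← hMl, hδmul, mul_inv_cancel, hδ1, hM2]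
      · refine congrArg (D₁ (δ g)) ?_
        rw [hy₀, hMl, ← M.lr_comm, ← M.lr_comm]
    have key := hmGinv g₀ (φG x) ((φG x g₀) • (1 : G →ᵇ ℂ) + φG y₀) ?_
    · rw [map_add, map_smul, hmG1, smul_eq_mul, mul_one] at key
      rw [hξapp, hξapp, ← key, hφGapp]
    · intro g
      have h1 : ((φG x g₀) • (1 : G →ᵇ ℂ) + φG y₀) g = φG x g₀ * 1 + φG y₀ g := rfl
      rw [h1, mul_one, ← hpw g]
  have hEqG : ∀ (g : G) (y : E), D₁ (δ g) y = ξG (M.l (δ g) y) - ξG (M.r (δ g) y) := by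
    intro g y
    have h := hGINV g (M.l (δ g) y)
    have h1 : M.l (δ g⁻¹) (M.l (δ g) y) = M.l 1 y := by
      rw [← hMl, hδmul, inv_mul_cancel, hδ1]
    have h2 : D₁ (δ g) (M.l 1 y) = D₁ (δ g) y := by
      have hd := hD1der (δ g) 1 y
      rw [mul_one, hD1one] at hd
      linear_combination -hd
    have h3 : M.l (δ g⁻¹) (M.r (δ g) (M.l (δ g) y)) = M.l 1 (M.r (δ g) y) := by
      rw [← M.lr_comm, ← hMl, hδmul, inv_mul_cancel, hδ1]
    rw [h1, h2, h3, hξP] at h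
    linear_combination -h
  have hK1 : ∀ (g : G) (c : A) (w : E),
      D₁ (δ g) (M.l (ιA c) w) = D₁ (δ g) (M.r (ιA (α g c)) w) := by
    intro g c w
    have h1 := hD1der (δ g) (ιA c) w
    have h2 := hD1der (ιA (α g c)) (δ g) w
    rw [hδι g c] at h1
    rw [hD1ι] at h1 h2
    linear_combination h2 - h1
  have hEqBase : ∀ (a : A) (z : E), ξG (M.l (ιA a) z) = ξG (M.r (ιA a) z) := by
    intro a z
    rw [hξapp, hξapp]
    congr 1
    ext g
    show D₁ (δ g) (M.l (δ g⁻¹) (M.l (ιA a) z)) = D₁ (δ g) (M.l (δ g⁻¹) (M.r (ιA a) z))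
    have h1 : M.l (δ g⁻¹) (M.l (ιA a) z) = M.l (ιA (α g⁻¹ a)) (M.l (δ g⁻¹) z) := by
      rw [← hMl, hδι g⁻¹ a, hMl]
    rw [h1, hK1 g (α g⁻¹ a) (M.l (δ g⁻¹) z), hαinv g a, ← M.lr_comm]
  -- the combined derivation vanishes on elementary elements
  have hD2gen : ∀ (a : A) (g : G) (x : E),
      D₁ (ιA a * δ g) x + ξG (M.r (ιA a * δ g) x) - ξG (M.l (ιA a * δ g) x) = 0 := by
    intro a g x
    have h1 := hD1der (ιA a) (δ g) x
    rw [hD1ι] at h1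
    have h2 := hEqG g (M.r (ιA a) x)
    have h3 : ξG (M.r (ιA a * δ g) x) = ξG (M.r (δ g) (M.r (ιA a) x)) := by rw [hMr]
    have h4 : ξG (M.l (ιA a * δ g) x) = ξG (M.l (δ g) (M.r (ιA a) x)) := by
      rw [hMl, hEqBase a (M.l (δ g) x), ← M.lr_comm]
    rw [h3, h4]
    linear_combination h1 + h2
  have hSINGLE : ∀ (a : A) (g : G), ιA a * δ g = e.symm (lp.single 1 g a) := by
    intro a g
    apply e.injective
    rw [e.apply_symm_apply]
    apply lp.ext
    funext k
    show e (ιA a * δ g) k = (lp.single (E := fun _ : G => A) 1 g a) k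
    rw [he]
    rw [tsum_eq_single 1 (fun h hne => by rw [hι, if_neg hne, zero_mul])]
    rw [hι, if_pos rfl, inv_one, one_mul, hδcoe]
    by_cases hk : k = g
    · rw [if_pos hk, map_one, mul_one]
      subst hk
      rw [lp.single_apply_self]
    · rw [if_neg hk, map_zero, mul_zero, lp.single_apply_ne 1 g _ hk]
  have hdense : Dense ((Submodule.span ℂ
      (Set.range (fun pr : A × G => ιA pr.1 * δ pr.2)) : Submodule ℂ B) : Set B) := by
    intro b
    have hs := lp.hasSum_single (E := fun _ : G => A) (p := (1:ENNReal)) (by norm_num) (e b)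
    have h5 : HasSum (fun g : G => e.symm (lp.single 1 g ((e b) g))) (e.symm (e b)) :=
      ContinuousLinearMap.hasSum e.symm.toLinearIsometry.toContinuousLinearMap hs
    rw [e.symm_apply_apply] at h5
    rw [show (fun g : G => e.symm (lp.single 1 g ((e b) g)))
        = fun g : G => ιA ((e b) g) * δ g from funext fun g => (hSINGLE _ g).symm] at h5
    have h6 : ∀ s : Finset G, (∑ g ∈ s, ιA ((e b) g) * δ g) ∈ Submodule.span ℂ
        (Set.range (fun pr : A × G => ιA pr.1 * δ pr.2)) := fun s =>
      Submodule.sum_mem _ (fun g _ => Submodule.subset_span ⟨(⟨(e b) g, g⟩ : A × G), rfl⟩)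
    exact mem_closure_of_tendsto h5 (Filter.Eventually.of_forall h6)
  have hD2 : ∀ (b : B) (x : E), D₁ b x + ξG (M.r b x) - ξG (M.l b x) = 0 := by
    intro b x
    set Tlin : B →ₗ[ℂ] ℂ :=
      { toFun := fun b' => D₁ b' x + ξG (M.r b' x) - ξG (M.l b' x)
        map_add' := fun b₁ b₂ => by
          show D₁ (b₁ + b₂) x + ξG (M.r (b₁+b₂) x) - ξG (M.l (b₁+b₂) x)
            = (D₁ b₁ x + ξG (M.r b₁ x) - ξG (M.l b₁ x))
              + (D₁ b₂ x + ξG (M.r b₂ x) - ξG (M.l b₂ x))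
          simp only [hD₁, map_add, ContinuousLinearMap.add_apply]
          ring
        map_smul' := fun c b₁ => by
          show D₁ (c • b₁) x + ξG (M.r (c • b₁) x) - ξG (M.l (c • b₁) x)
            = (RingHom.id ℂ c) • (D₁ b₁ x + ξG (M.r b₁ x) - ξG (M.l b₁ x))
          simp only [hD₁, map_smul, ContinuousLinearMap.smul_apply, smul_eq_mul,
            RingHom.id_apply]
          ring } with hTdef
    have hTb : ∀ b' : B, ‖Tlin b'‖
        ≤ ((‖D‖ * (K*K) + 2*(‖ψc‖*K)) * ‖x‖ + 2 * (‖ξG‖ * (K * ‖x‖))) * ‖b'‖ := by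
      intro b'
      show ‖D₁ b' x + ξG (M.r b' x) - ξG (M.l b' x)‖ ≤ _
      have n1 := hD1bdd b' x
      have n2 : ‖ξG (M.r b' x)‖ ≤ ‖ξG‖ * (K * ‖b'‖ * ‖x‖) :=
        le_trans (ξG.le_opNorm _) (mul_le_mul_of_nonneg_left (hKb b' x).2 (norm_nonneg _))
      have n3 : ‖ξG (M.l b' x)‖ ≤ ‖ξG‖ * (K * ‖b'‖ * ‖x‖) :=
        le_trans (ξG.le_opNorm _) (mul_le_mul_of_nonneg_left (hKb b' x).1 (norm_nonneg _))
      have t1 := norm_sub_le (D₁ b' x + ξG (M.r b' x)) (ξG (M.l b' x))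
      have t2 := norm_add_le (D₁ b' x) (ξG (M.r b' x))
      calc ‖D₁ b' x + ξG (M.r b' x) - ξG (M.l b' x)‖
          ≤ ‖D₁ b' x‖ + ‖ξG (M.r b' x)‖ + ‖ξG (M.l b' x)‖ := by linarith
        _ ≤ (‖D‖ * (K*K) + 2*(‖ψc‖*K)) * (‖b'‖*‖x‖)
            + ‖ξG‖*(K*‖b'‖*‖x‖) + ‖ξG‖*(K*‖b'‖*‖x‖) := by linarith
        _ = ((‖D‖ * (K*K) + 2*(‖ψc‖*K)) * ‖x‖ + 2 * (‖ξG‖ * (K * ‖x‖))) * ‖b'‖ := by ring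
    set T : B →L[ℂ] ℂ := Tlin.mkContinuous _ hTb with hTc
    have hT0 : T = 0 := by
      apply ContinuousLinearMap.ext_on hdense
      rintro s ⟨⟨a, g⟩, rfl⟩
      show Tlin (ιA a * δ g) = 0
      exact hD2gen a g x
    exact DFunLike.congr_fun hT0 b
  -- final assembly
  refine ⟨(2:ℂ) • ((D 1).comp (M.r 1)) - D 1 - ψc - ξG, ?_⟩
  intro b x
  simp only [ContinuousLinearMap.sub_apply, ContinuousLinearMap.smul_apply,
    ContinuousLinearMap.comp_apply, smul_eq_mul]
  rw [hM4 b x, hC4 b x]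
  have f3 := hD2 b x
  simp only [hD₁] at f3
  have f4 := hC1 b x
  have f5 := hC2 b (M.r 1 x)
  rw [hM3 b x] at f5
  linear_combination f3 - f4 + f5
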